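/- Given menus (q_i, t_i), i = 1, …, M, with expected revenues R_i := ∫ (t_i(ω) − C(q_i(ω), Θ_i(ω))) dG(ω) and all relevant functions G-integrable, define the modified payment t̂_i(ω) := ∫ t_i dG + C(q_i(ω), Θ_i(ω)) − ∫ C(q_i(ω′), Θ_i(ω′)) dG(ω′). Then: (i) ∫ t̂_i dG = ∫ t_i dG for every i; (ii) t̂_i(ω) − C(q_i(ω), Θ_i(ω)) = R_i for every ω, so if R_i ≥ 0 the modified mechanism satisfies ex-post individual rationality (no penalty risk for any wind realization); and (iii) ∫ [t̂_j(ω) − C(q_j(ω), Θ_i(ω))] dG(ω) = ∫ [t_j(ω) − C(q_j(ω), Θ_i(ω))] dG(ω) for all i, j, so the monitoring incentive-compatibility constraints, the seller's expected revenue, the buyer's expected utility, and the designer's objective are all unchanged. -/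

import Mathlib

open Set MeasureTheory

/-- **No-penalty modification under wind monitoring.** Given menus `(q i, t i)` with
expected revenues `R i`, the modified payment
`t̂ i ω = ∫ t i dG + C (q i ω) (Θ i ω) - ∫ С (q i ω') (Θ i ω') dG(ω')` satisfies:
(i) the same expected payment; (ii) ex-post revenue constantly equal to `R i` (hence ex-post
IR whenever `R i ≥ 0`); and (iii) unchanged monitoring IC constraints, seller's expected
revenue, buyer's expected utility and designer's objective. -/
theorem no_penalty_modification
    (ωl ωu : ℝ) (hω : ωl < ωu) (M : ℕ)
    (G : Measure ℝ) [IsProbabilityMeasure G]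
    (C : ℝ → ℝ → ℝ) (Θ q t : Fin M → ℝ → ℝ)
    (htint : ∀ i, Integrable (fun ω => t i ω) G)
    (hCint : ∀ i j, Integrable (fun ω => C (q j ω) (Θ i ω)) G)
    (R : Fin M → ℝ)
    (hR : ∀ i, R i = ∫ ω, (t i ω - C (q i ω) (Θ i ω)) ∂G)
    (that : Fin M → ℝ → ℝ)
    (hthat : ∀ i ω, that i ω = (∫ ω', t i ω' ∂G) + C (q i ω) (Θ i ω)
        - ∫ ω', C (q i ω') (Θ i ω') ∂G) :
    (∀ i, (∫ ω, that i ω ∂G) = ∫ ω, t i ω ∂G) ∧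
    (∀ i ω, that i ω - C (q i ω) (Θ i ω) = R i) ∧
    (∀ i, 0 ≤ R i → ∀ ω, 0 ≤ that i ω - C (q i ω) (Θ i ω)) ∧
    (∀ i j, (∫ ω, (that j ω - C (q j ω) (Θ i ω)) ∂G)
        = ∫ ω, (t j ω - C (q j ω) (Θ i ω)) ∂G) := by
  have key : ∀ i ω, that i ω - C (q i ω) (Θ i ω) = R i := by
    intro i ω
    rw [hthat, hR, integral_sub (htint i) (hCint i i)]
    ring
  have hthatint : ∀ i, Integrable (fun ω => that i ω) G := by
    intro i
    have : (fun ω => that i ω) = fun ω => R i + C (q i ω) (Θ i ω) := by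
      funext ω
      have := key i ω; linarith
    rw [this]
    exact (integrable_const _).add (hCint i i)
  refine ⟨?_, key, fun i hRi ω => by rw [key]; exact hRi, ?_⟩
  · intro i
    have : (fun ω => that i ω) = fun ω => R i + C (q i ω) (Θ i ω) := by
      funext ω; have := key i ω; linarith
    rw [this, integral_add (integrable_const _) (hCint i i), integral_const,
      probReal_univ, smul_eq_mul, one_mul, hR,
      integral_sub (htint i) (hCint i i)]
    ring
  · intro i j
    rw [integral_sub (hthatint j) (hCint i j), integral_sub (htint j) (hCint i j)]
    congr 1
    have : (fun ω => that j ω) = fun ω => R j + C (q j ω) (Θ j ω) := by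
      funext ω; have := key j ω; linarith
    rw [this, integral_add (integrable_const _) (hCint j j), integral_const,
      probReal_univ, smul_eq_mul, one_mul, hR,
      integral_sub (htint j) (hCint j j)]
    ring
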